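/- The function p(x,t) = (t/(π√2))·(t²+x²)/(t⁴+x⁴) is a probability density in x for each t > 0 (it is nonnegative and ∫_{-∞}^{∞} p(x,t) dx = 1), and it satisfies the fourth-order PDE ∂⁴p/∂t⁴ + ∂⁴p/∂x⁴ = 0 for x ∈ ℝ, t > 0. -/

import Mathlib

open Real MeasureTheory

theorem hasDerivAt_congr {f g : ℝ → ℝ} {f' g' x : ℝ} (h : HasDerivAt f f' x)
    (h1 : ∀ y, f y = g y) (h2 : f' = g') : HasDerivAt g g' x := by
  rw [← funext h1, ← h2]; exact h

theorem deriv_congr_pos {f g : ℝ → ℝ} (h : ∀ τ, 0 < τ → f τ = g τ) {s : ℝ} (hs : 0 < s) :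
    deriv f s = deriv g s :=
  Filter.EventuallyEq.deriv_eq ((eventually_gt_nhds hs).mono h)

/-- Density of the composition `F(T_t)`. -/
noncomputable def doubleCauchy (x t : ℝ) : ℝ :=
  (t / (Real.pi * Real.sqrt 2)) * ((t ^ 2 + x ^ 2) / (t ^ 4 + x ^ 4))

lemma tstep0 (x τ : ℝ) (h0 : 0 < τ ^ 4 + x ^ 4) :
    HasDerivAt (fun τ : ℝ => ((1 : ℝ) * τ ^ 3 + (1 : ℝ) * x ^ 2 * τ ^ 1) / (τ ^ 4 + x ^ 4) ^ 1)
      ((((-1) : ℝ) * τ ^ 6 + ((-3) : ℝ) * x ^ 2 * τ ^ 4 + (3 : ℝ) * x ^ 4 * τ ^ 2 + (1 : ℝ) * x ^ 6) / (τ ^ 4 + x ^ 4) ^ 2) τ := by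
  have hN : HasDerivAt (fun τ : ℝ => (1 : ℝ) * τ ^ 3 + (1 : ℝ) * x ^ 2 * τ ^ 1) ((3 : ℝ) * τ ^ 2 + (1 : ℝ) * x ^ 2) τ :=
    hasDerivAt_congr (((hasDerivAt_pow 3 τ).const_mul ((1 : ℝ))).add ((hasDerivAt_pow 1 τ).const_mul ((1 : ℝ) * x ^ 2))) (fun z => by simp only [Pi.add_apply]) (by push_cast; ring)
  have hD : HasDerivAt (fun τ : ℝ => (τ ^ 4 + x ^ 4) ^ 1)
      ((4 : ℝ) * τ ^ 3 * (τ ^ 4 + x ^ 4) ^ 0) τ :=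
    hasDerivAt_congr (((hasDerivAt_pow 4 τ).add_const (x ^ 4)).pow 1)
      (fun z => rfl) (by push_cast; ring)
  refine hasDerivAt_congr (hN.div hD (pow_ne_zero _ h0.ne')) (fun z => rfl) ?_
  rw [div_eq_div_iff (pow_ne_zero 2 (pow_ne_zero 1 h0.ne')) (pow_ne_zero 2 h0.ne')]
  ring

lemma tstep1 (x τ : ℝ) (h0 : 0 < τ ^ 4 + x ^ 4) :
    HasDerivAt (fun τ : ℝ => (((-1) : ℝ) * τ ^ 6 + ((-3) : ℝ) * x ^ 2 * τ ^ 4 + (3 : ℝ) * x ^ 4 * τ ^ 2 + (1 : ℝ) * x ^ 6) / (τ ^ 4 + x ^ 4) ^ 2)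
      (((2 : ℝ) * τ ^ 9 + (12 : ℝ) * x ^ 2 * τ ^ 7 + ((-24) : ℝ) * x ^ 4 * τ ^ 5 + ((-20) : ℝ) * x ^ 6 * τ ^ 3 + (6 : ℝ) * x ^ 8 * τ ^ 1) / (τ ^ 4 + x ^ 4) ^ 3) τ := by
  have hN : HasDerivAt (fun τ : ℝ => ((-1) : ℝ) * τ ^ 6 + ((-3) : ℝ) * x ^ 2 * τ ^ 4 + (3 : ℝ) * x ^ 4 * τ ^ 2 + (1 : ℝ) * x ^ 6) (((-6) : ℝ) * τ ^ 5 + ((-12) : ℝ) * x ^ 2 * τ ^ 3 + (6 : ℝ) * x ^ 4 * τ ^ 1) τ :=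
    hasDerivAt_congr (((((hasDerivAt_pow 6 τ).const_mul (((-1) : ℝ))).add ((hasDerivAt_pow 4 τ).const_mul (((-3) : ℝ) * x ^ 2))).add ((hasDerivAt_pow 2 τ).const_mul ((3 : ℝ) * x ^ 4))).add (hasDerivAt_const τ ((1 : ℝ) * x ^ 6))) (fun z => by simp only [Pi.add_apply]) (by push_cast; ring)
  have hD : HasDerivAt (fun τ : ℝ => (τ ^ 4 + x ^ 4) ^ 2)
      ((8 : ℝ) * τ ^ 3 * (τ ^ 4 + x ^ 4) ^ 1) τ :=
    hasDerivAt_congr (((hasDerivAt_pow 4 τ).add_const (x ^ 4)).pow 2)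
      (fun z => rfl) (by push_cast; ring)
  refine hasDerivAt_congr (hN.div hD (pow_ne_zero _ h0.ne')) (fun z => rfl) ?_
  rw [div_eq_div_iff (pow_ne_zero 2 (pow_ne_zero 2 h0.ne')) (pow_ne_zero 3 h0.ne')]
  ring

lemma tstep2 (x τ : ℝ) (h0 : 0 < τ ^ 4 + x ^ 4) :
    HasDerivAt (fun τ : ℝ => ((2 : ℝ) * τ ^ 9 + (12 : ℝ) * x ^ 2 * τ ^ 7 + ((-24) : ℝ) * x ^ 4 * τ ^ 5 + ((-20) : ℝ) * x ^ 6 * τ ^ 3 + (6 : ℝ) * x ^ 8 * τ ^ 1) / (τ ^ 4 + x ^ 4) ^ 3)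
      ((((-6) : ℝ) * τ ^ 12 + ((-60) : ℝ) * x ^ 2 * τ ^ 10 + (186 : ℝ) * x ^ 4 * τ ^ 8 + (264 : ℝ) * x ^ 6 * τ ^ 6 + ((-186) : ℝ) * x ^ 8 * τ ^ 4 + ((-60) : ℝ) * x ^ 10 * τ ^ 2 + (6 : ℝ) * x ^ 12) / (τ ^ 4 + x ^ 4) ^ 4) τ := by
  have hN : HasDerivAt (fun τ : ℝ => (2 : ℝ) * τ ^ 9 + (12 : ℝ) * x ^ 2 * τ ^ 7 + ((-24) : ℝ) * x ^ 4 * τ ^ 5 + ((-20) : ℝ) * x ^ 6 * τ ^ 3 + (6 : ℝ) * x ^ 8 * τ ^ 1) ((18 : ℝ) * τ ^ 8 + (84 : ℝ) * x ^ 2 * τ ^ 6 + ((-120) : ℝ) * x ^ 4 * τ ^ 4 + ((-60) : ℝ) * x ^ 6 * τ ^ 2 + (6 : ℝ) * x ^ 8) τ :=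
    hasDerivAt_congr ((((((hasDerivAt_pow 9 τ).const_mul ((2 : ℝ))).add ((hasDerivAt_pow 7 τ).const_mul ((12 : ℝ) * x ^ 2))).add ((hasDerivAt_pow 5 τ).const_mul (((-24) : ℝ) * x ^ 4))).add ((hasDerivAt_pow 3 τ).const_mul (((-20) : ℝ) * x ^ 6))).add ((hasDerivAt_pow 1 τ).const_mul ((6 : ℝ) * x ^ 8))) (fun z => by simp only [Pi.add_apply]) (by push_cast; ring)
  have hD : HasDerivAt (fun τ : ℝ => (τ ^ 4 + x ^ 4) ^ 3)
      ((12 : ℝ) * τ ^ 3 * (τ ^ 4 + x ^ 4) ^ 2) τ :=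
    hasDerivAt_congr (((hasDerivAt_pow 4 τ).add_const (x ^ 4)).pow 3)
      (fun z => rfl) (by push_cast; ring)
  refine hasDerivAt_congr (hN.div hD (pow_ne_zero _ h0.ne')) (fun z => rfl) ?_
  rw [div_eq_div_iff (pow_ne_zero 2 (pow_ne_zero 3 h0.ne')) (pow_ne_zero 4 h0.ne')]
  ring

lemma tstep3 (x τ : ℝ) (h0 : 0 < τ ^ 4 + x ^ 4) :
    HasDerivAt (fun τ : ℝ => (((-6) : ℝ) * τ ^ 12 + ((-60) : ℝ) * x ^ 2 * τ ^ 10 + (186 : ℝ) * x ^ 4 * τ ^ 8 + (264 : ℝ) * x ^ 6 * τ ^ 6 + ((-186) : ℝ) * x ^ 8 * τ ^ 4 + ((-60) : ℝ) * x ^ 10 * τ ^ 2 + (6 : ℝ) * x ^ 12) / (τ ^ 4 + x ^ 4) ^ 4)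
      (((24 : ℝ) * τ ^ 15 + (360 : ℝ) * x ^ 2 * τ ^ 13 + ((-1560) : ℝ) * x ^ 4 * τ ^ 11 + ((-3240) : ℝ) * x ^ 6 * τ ^ 9 + (3720 : ℝ) * x ^ 8 * τ ^ 7 + (2424 : ℝ) * x ^ 10 * τ ^ 5 + ((-840) : ℝ) * x ^ 12 * τ ^ 3 + ((-120) : ℝ) * x ^ 14 * τ ^ 1) / (τ ^ 4 + x ^ 4) ^ 5) τ := by
  have hN : HasDerivAt (fun τ : ℝ => ((-6) : ℝ) * τ ^ 12 + ((-60) : ℝ) * x ^ 2 * τ ^ 10 + (186 : ℝ) * x ^ 4 * τ ^ 8 + (264 : ℝ) * x ^ 6 * τ ^ 6 + ((-186) : ℝ) * x ^ 8 * τ ^ 4 + ((-60) : ℝ) * x ^ 10 * τ ^ 2 + (6 : ℝ) * x ^ 12) (((-72) : ℝ) * τ ^ 11 + ((-600) : ℝ) * x ^ 2 * τ ^ 9 + (1488 : ℝ) * x ^ 4 * τ ^ 7 + (1584 : ℝ) * x ^ 6 * τ ^ 5 + ((-744) : ℝ) * x ^ 8 * τ ^ 3 + ((-120) : ℝ) *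 x ^ 10 * τ ^ 1) τ :=
    hasDerivAt_congr ((((((((hasDerivAt_pow 12 τ).const_mul (((-6) : ℝ))).add ((hasDerivAt_pow 10 τ).const_mul (((-60) : ℝ) * x ^ 2))).add ((hasDerivAt_pow 8 τ).const_mul ((186 : ℝ) * x ^ 4))).add ((hasDerivAt_pow 6 τ).const_mul ((264 : ℝ) * x ^ 6))).add ((hasDerivAt_pow 4 τ).const_mul (((-186) : ℝ) * x ^ 8))).add ((hasDerivAt_pow 2 τ).const_mul (((-60) : ℝ) * x ^ 10))).add (hasDerivAt_const τ ((6 : ℝ) * x ^ 12))) (fun z => by simp only [Pi.add_apply]) (by push_cast; ring)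
  have hD : HasDerivAt (fun τ : ℝ => (τ ^ 4 + x ^ 4) ^ 4)
      ((16 : ℝ) * τ ^ 3 * (τ ^ 4 + x ^ 4) ^ 3) τ :=
    hasDerivAt_congr (((hasDerivAt_pow 4 τ).add_const (x ^ 4)).pow 4)
      (fun z => rfl) (by push_cast; ring)
  refine hasDerivAt_congr (hN.div hD (pow_ne_zero _ h0.ne')) (fun z => rfl) ?_
  rw [div_eq_div_iff (pow_ne_zero 2 (pow_ne_zero 4 h0.ne')) (pow_ne_zero 5 h0.ne')]
  ring

lemma xstep0 (s y : ℝ) (h0 : 0 < y ^ 4 + s ^ 4) :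
    HasDerivAt (fun y : ℝ => ((1 : ℝ) * s ^ 1 * y ^ 2 + (1 : ℝ) * s ^ 3) / (y ^ 4 + s ^ 4) ^ 1)
      ((((-2) : ℝ) * s ^ 1 * y ^ 5 + ((-4) : ℝ) * s ^ 3 * y ^ 3 + (2 : ℝ) * s ^ 5 * y ^ 1) / (y ^ 4 + s ^ 4) ^ 2) y := by
  have hN : HasDerivAt (fun y : ℝ => (1 : ℝ) * s ^ 1 * y ^ 2 + (1 : ℝ) * s ^ 3) ((2 : ℝ) * s ^ 1 * y ^ 1) y :=
    hasDerivAt_congr (((hasDerivAt_pow 2 y).const_mul ((1 : ℝ) * s ^ 1)).add (hasDerivAt_const y ((1 : ℝ) * s ^ 3))) (fun z => by simp only [Pi.add_apply]) (by push_cast; ring)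
  have hD : HasDerivAt (fun y : ℝ => (y ^ 4 + s ^ 4) ^ 1)
      ((4 : ℝ) * y ^ 3 * (y ^ 4 + s ^ 4) ^ 0) y :=
    hasDerivAt_congr (((hasDerivAt_pow 4 y).add_const (s ^ 4)).pow 1)
      (fun z => rfl) (by push_cast; ring)
  refine hasDerivAt_congr (hN.div hD (pow_ne_zero _ h0.ne')) (fun z => rfl) ?_
  rw [div_eq_div_iff (pow_ne_zero 2 (pow_ne_zero 1 h0.ne')) (pow_ne_zero 2 h0.ne')]
  ring

lemma xstep1 (s y : ℝ) (h0 : 0 < y ^ 4 + s ^ 4) :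
    HasDerivAt (fun y : ℝ => (((-2) : ℝ) * s ^ 1 * y ^ 5 + ((-4) : ℝ) * s ^ 3 * y ^ 3 + (2 : ℝ) * s ^ 5 * y ^ 1) / (y ^ 4 + s ^ 4) ^ 2)
      (((6 : ℝ) * s ^ 1 * y ^ 8 + (20 : ℝ) * s ^ 3 * y ^ 6 + ((-24) : ℝ) * s ^ 5 * y ^ 4 + ((-12) : ℝ) * s ^ 7 * y ^ 2 + (2 : ℝ) * s ^ 9) / (y ^ 4 + s ^ 4) ^ 3) y := by
  have hN : HasDerivAt (fun y : ℝ => ((-2) : ℝ) * s ^ 1 * y ^ 5 + ((-4) : ℝ) * s ^ 3 * y ^ 3 + (2 : ℝ) * s ^ 5 * y ^ 1) (((-10) : ℝ) * s ^ 1 * y ^ 4 + ((-12) : ℝ) * s ^ 3 * y ^ 2 + (2 : ℝ) * s ^ 5) y :=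
    hasDerivAt_congr ((((hasDerivAt_pow 5 y).const_mul (((-2) : ℝ) * s ^ 1)).add ((hasDerivAt_pow 3 y).const_mul (((-4) : ℝ) * s ^ 3))).add ((hasDerivAt_pow 1 y).const_mul ((2 : ℝ) * s ^ 5))) (fun z => by simp only [Pi.add_apply]) (by push_cast; ring)
  have hD : HasDerivAt (fun y : ℝ => (y ^ 4 + s ^ 4) ^ 2)
      ((8 : ℝ) * y ^ 3 * (y ^ 4 + s ^ 4) ^ 1) y :=
    hasDerivAt_congr (((hasDerivAt_pow 4 y).add_const (s ^ 4)).pow 2)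
      (fun z => rfl) (by push_cast; ring)
  refine hasDerivAt_congr (hN.div hD (pow_ne_zero _ h0.ne')) (fun z => rfl) ?_
  rw [div_eq_div_iff (pow_ne_zero 2 (pow_ne_zero 2 h0.ne')) (pow_ne_zero 3 h0.ne')]
  ring

lemma xstep2 (s y : ℝ) (h0 : 0 < y ^ 4 + s ^ 4) :
    HasDerivAt (fun y : ℝ => ((6 : ℝ) * s ^ 1 * y ^ 8 + (20 : ℝ) * s ^ 3 * y ^ 6 + ((-24) : ℝ) * s ^ 5 * y ^ 4 + ((-12) : ℝ) * s ^ 7 * y ^ 2 + (2 : ℝ) * s ^ 9) / (y ^ 4 + s ^ 4) ^ 3)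
      ((((-24) : ℝ) * s ^ 1 * y ^ 11 + ((-120) : ℝ) * s ^ 3 * y ^ 9 + (240 : ℝ) * s ^ 5 * y ^ 7 + (240 : ℝ) * s ^ 7 * y ^ 5 + ((-120) : ℝ) * s ^ 9 * y ^ 3 + ((-24) : ℝ) * s ^ 11 * y ^ 1) / (y ^ 4 + s ^ 4) ^ 4) y := by
  have hN : HasDerivAt (fun y : ℝ => (6 : ℝ) * s ^ 1 * y ^ 8 + (20 : ℝ) * s ^ 3 * y ^ 6 + ((-24) : ℝ) * s ^ 5 * y ^ 4 + ((-12) : ℝ) * s ^ 7 * y ^ 2 + (2 : ℝ) * s ^ 9) ((48 : ℝ) * s ^ 1 * y ^ 7 + (120 : ℝ) * s ^ 3 * y ^ 5 + ((-96) : ℝ) * s ^ 5 * y ^ 3 + ((-24) : ℝ) * s ^ 7 * y ^ 1) y :=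
    hasDerivAt_congr ((((((hasDerivAt_pow 8 y).const_mul ((6 : ℝ) * s ^ 1)).add ((hasDerivAt_pow 6 y).const_mul ((20 : ℝ) * s ^ 3))).add ((hasDerivAt_pow 4 y).const_mul (((-24) : ℝ) * s ^ 5))).add ((hasDerivAt_pow 2 y).const_mul (((-12) : ℝ) * s ^ 7))).add (hasDerivAt_const y ((2 : ℝ) * s ^ 9))) (fun z => by simp only [Pi.add_apply]) (by push_cast; ring)
  have hD : HasDerivAt (fun y : ℝ => (y ^ 4 + s ^ 4) ^ 3)
      ((12 : ℝ) * y ^ 3 * (y ^ 4 + s ^ 4) ^ 2) y :=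
    hasDerivAt_congr (((hasDerivAt_pow 4 y).add_const (s ^ 4)).pow 3)
      (fun z => rfl) (by push_cast; ring)
  refine hasDerivAt_congr (hN.div hD (pow_ne_zero _ h0.ne')) (fun z => rfl) ?_
  rw [div_eq_div_iff (pow_ne_zero 2 (pow_ne_zero 3 h0.ne')) (pow_ne_zero 4 h0.ne')]
  ring

lemma xstep3 (s y : ℝ) (h0 : 0 < y ^ 4 + s ^ 4) :
    HasDerivAt (fun y : ℝ => (((-24) : ℝ) * s ^ 1 * y ^ 11 + ((-120) : ℝ) * s ^ 3 * y ^ 9 + (240 : ℝ) * s ^ 5 * y ^ 7 + (240 : ℝ) * s ^ 7 * y ^ 5 + ((-120) : ℝ) * s ^ 9 * y ^ 3 + ((-24) : ℝ) * s ^ 11 * y ^ 1) / (y ^ 4 + s ^ 4) ^ 4)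
      (((120 : ℝ) * s ^ 1 * y ^ 14 + (840 : ℝ) * s ^ 3 * y ^ 12 + ((-2424) : ℝ) * s ^ 5 * y ^ 10 + ((-3720) : ℝ) * s ^ 7 * y ^ 8 + (3240 : ℝ) * s ^ 9 * y ^ 6 + (1560 : ℝ) * s ^ 11 * y ^ 4 + ((-360) : ℝ) * s ^ 13 * y ^ 2 + ((-24) : ℝ) * s ^ 15) / (y ^ 4 + s ^ 4) ^ 5) y := by
  have hN : HasDerivAt (fun y : ℝ => ((-24) : ℝ) * s ^ 1 * y ^ 11 + ((-120) : ℝ) * s ^ 3 * y ^ 9 + (240 : ℝ) * s ^ 5 * y ^ 7 + (240 : ℝ) * s ^ 7 * y ^ 5 + ((-120) : ℝ) * s ^ 9 * y ^ 3 + ((-24) : ℝ) * s ^ 11 * y ^ 1) (((-264) : ℝ) * s ^ 1 * y ^ 10 + ((-1080) : ℝ) * s ^ 3 * y ^ 8 + (1680 : ℝ) * s ^ 5 * y ^ 6 + (1200 : ℝ) * s ^ 7 * y ^ 4 + ((-360) : ℝ) * s ^ 9 * y ^ 2 + ((-24) : ℝ) * s ^ 11) y :=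
    hasDerivAt_congr (((((((hasDerivAt_pow 11 y).const_mul (((-24) : ℝ) * s ^ 1)).add ((hasDerivAt_pow 9 y).const_mul (((-120) : ℝ) * s ^ 3))).add ((hasDerivAt_pow 7 y).const_mul ((240 : ℝ) * s ^ 5))).add ((hasDerivAt_pow 5 y).const_mul ((240 : ℝ) * s ^ 7))).add ((hasDerivAt_pow 3 y).const_mul (((-120) : ℝ) * s ^ 9))).add ((hasDerivAt_pow 1 y).const_mul (((-24) : ℝ) * s ^ 11))) (fun z => by simp only [Pi.add_apply]) (by push_cast; ring)
  have hD : HasDerivAt (fun y : ℝ => (y ^ 4 + s ^ 4) ^ 4)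
      ((16 : ℝ) * y ^ 3 * (y ^ 4 + s ^ 4) ^ 3) y :=
    hasDerivAt_congr (((hasDerivAt_pow 4 y).add_const (s ^ 4)).pow 4)
      (fun z => rfl) (by push_cast; ring)
  refine hasDerivAt_congr (hN.div hD (pow_ne_zero _ h0.ne')) (fun z => rfl) ?_
  rw [div_eq_div_iff (pow_ne_zero 2 (pow_ne_zero 4 h0.ne')) (pow_ne_zero 5 h0.ne')]
  ring
lemma tchain (x : ℝ) : ∀ s : ℝ, 0 < s →
    (deriv^[4] fun τ => doubleCauchy x τ) s
      = (π * Real.sqrt 2)⁻¹ * (((24 : ℝ) * s ^ 15 + (360 : ℝ) * x ^ 2 * s ^ 13 + ((-1560) : ℝ) * x ^ 4 * s ^ 11 + ((-3240) : ℝ) * x ^ 6 * s ^ 9 + (3720 : ℝ) * x ^ 8 * s ^ 7 + (2424 : ℝ) * x ^ 10 * s ^ 5 + ((-840) : ℝ) * x ^ 12 * s ^ 3 + ((-120) : ℝ) * x ^ 14 * s ^ 1) / (s ^ 4 + x ^ 4) ^ 5) := by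
  have e0 : ∀ τ : ℝ, 0 < τ → deriv^[0] (fun τ => doubleCauchy x τ) τ = (π * Real.sqrt 2)⁻¹ * (((1 : ℝ) * τ ^ 3 + (1 : ℝ) * x ^ 2 * τ ^ 1) / (τ ^ 4 + x ^ 4) ^ 1) := by
    intro τ hτ; simp only [Function.iterate_zero_apply, doubleCauchy]; ring
  have e1 : ∀ τ : ℝ, 0 < τ → deriv^[1] (fun τ => doubleCauchy x τ) τ = (π * Real.sqrt 2)⁻¹ * ((((-1) : ℝ) * τ ^ 6 + ((-3) : ℝ) * x ^ 2 * τ ^ 4 + (3 : ℝ) * x ^ 4 * τ ^ 2 + (1 : ℝ) * x ^ 6) / (τ ^ 4 + x ^ 4) ^ 2) := by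
    intro τ hτ
    have h0 : (0:ℝ) < τ ^ 4 + x ^ 4 := by positivity
    have := deriv_congr_pos e0 hτ
    rw [show deriv^[1] (fun τ => doubleCauchy x τ) τ
        = deriv (deriv^[0] fun τ => doubleCauchy x τ) τ from rfl, this,
      ((tstep0 x τ h0).const_mul ((π * Real.sqrt 2)⁻¹)).deriv]
  have e2 : ∀ τ : ℝ, 0 < τ → deriv^[2] (fun τ => doubleCauchy x τ) τ = (π * Real.sqrt 2)⁻¹ * (((2 : ℝ) * τ ^ 9 + (12 : ℝ) * x ^ 2 * τ ^ 7 + ((-24) : ℝ) * x ^ 4 * τ ^ 5 + ((-20) : ℝ) * x ^ 6 * τ ^ 3 + (6 : ℝ) * x ^ 8 * τ ^ 1) / (τ ^ 4 + x ^ 4) ^ 3) := by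
    intro τ hτ
    have h0 : (0:ℝ) < τ ^ 4 + x ^ 4 := by positivity
    have := deriv_congr_pos e1 hτ
    rw [show deriv^[2] (fun τ => doubleCauchy x τ) τ
        = deriv (deriv^[1] fun τ => doubleCauchy x τ) τ from rfl, this,
      ((tstep1 x τ h0).const_mul ((π * Real.sqrt 2)⁻¹)).deriv]
  have e3 : ∀ τ : ℝ, 0 < τ → deriv^[3] (fun τ => doubleCauchy x τ) τ = (π * Real.sqrt 2)⁻¹ * ((((-6) : ℝ) * τ ^ 12 + ((-60) : ℝ) * x ^ 2 * τ ^ 10 + (186 : ℝ) * x ^ 4 * τ ^ 8 + (264 : ℝ) * x ^ 6 * τ ^ 6 + ((-186) : ℝ) * x ^ 8 * τ ^ 4 + ((-60) : ℝ) * x ^ 10 * τ ^ 2 + (6 : ℝ) * x ^ 12) / (τ ^ 4 + x ^ 4) ^ 4) := by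
    intro τ hτ
    have h0 : (0:ℝ) < τ ^ 4 + x ^ 4 := by positivity
    have := deriv_congr_pos e2 hτ
    rw [show deriv^[3] (fun τ => doubleCauchy x τ) τ
        = deriv (deriv^[2] fun τ => doubleCauchy x τ) τ from rfl, this,
      ((tstep2 x τ h0).const_mul ((π * Real.sqrt 2)⁻¹)).deriv]
  have e4 : ∀ τ : ℝ, 0 < τ → deriv^[4] (fun τ => doubleCauchy x τ) τ = (π * Real.sqrt 2)⁻¹ * (((24 : ℝ) * τ ^ 15 + (360 : ℝ) * x ^ 2 * τ ^ 13 + ((-1560) : ℝ) * x ^ 4 * τ ^ 11 + ((-3240) : ℝ) * x ^ 6 * τ ^ 9 + (3720 : ℝ) * x ^ 8 * τ ^ 7 + (2424 : ℝ) * x ^ 10 * τ ^ 5 + ((-840) : ℝ) * x ^ 12 * τ ^ 3 + ((-120) : ℝ) * x ^ 14 * τ ^ 1) / (τ ^ 4 + x ^ 4) ^ 5) := by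
    intro τ hτ
    have h0 : (0:ℝ) < τ ^ 4 + x ^ 4 := by positivity
    have := deriv_congr_pos e3 hτ
    rw [show deriv^[4] (fun τ => doubleCauchy x τ) τ
        = deriv (deriv^[3] fun τ => doubleCauchy x τ) τ from rfl, this,
      ((tstep3 x τ h0).const_mul ((π * Real.sqrt 2)⁻¹)).deriv]
  exact fun s hs => e4 s hs

lemma xchain (s : ℝ) (hs : 0 < s) (x : ℝ) :
    (deriv^[4] fun y => doubleCauchy y s) x
      = (π * Real.sqrt 2)⁻¹ * (((120 : ℝ) * s ^ 1 * x ^ 14 + (840 : ℝ) * s ^ 3 * x ^ 12 + ((-2424) : ℝ) * s ^ 5 * x ^ 10 + ((-3720) : ℝ) * s ^ 7 * x ^ 8 + (3240 : ℝ) * s ^ 9 * x ^ 6 + (1560 : ℝ) * s ^ 11 * x ^ 4 + ((-360) : ℝ) * s ^ 13 * x ^ 2 + ((-24) : ℝ) * s ^ 15) / (x ^ 4 + s ^ 4) ^ 5) := by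
  have e0 : ∀ y : ℝ, deriv^[0] (fun y => doubleCauchy y s) y = (π * Real.sqrt 2)⁻¹ * (((1 : ℝ) * s ^ 1 * y ^ 2 + (1 : ℝ) * s ^ 3) / (y ^ 4 + s ^ 4) ^ 1) := by
    intro y; simp only [Function.iterate_zero_apply, doubleCauchy]; ring
  have e1 : ∀ y : ℝ, deriv^[1] (fun y => doubleCauchy y s) y = (π * Real.sqrt 2)⁻¹ * ((((-2) : ℝ) * s ^ 1 * y ^ 5 + ((-4) : ℝ) * s ^ 3 * y ^ 3 + (2 : ℝ) * s ^ 5 * y ^ 1) / (y ^ 4 + s ^ 4) ^ 2) := by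
    intro y
    have h0 : (0:ℝ) < y ^ 4 + s ^ 4 := by positivity
    rw [show deriv^[1] (fun y => doubleCauchy y s) y
        = deriv (deriv^[0] fun y => doubleCauchy y s) y from rfl,
      Filter.EventuallyEq.deriv_eq (Filter.Eventually.of_forall e0),
      ((xstep0 s y h0).const_mul ((π * Real.sqrt 2)⁻¹)).deriv]
  have e2 : ∀ y : ℝ, deriv^[2] (fun y => doubleCauchy y s) y = (π * Real.sqrt 2)⁻¹ * (((6 : ℝ) * s ^ 1 * y ^ 8 + (20 : ℝ) * s ^ 3 * y ^ 6 + ((-24) : ℝ) * s ^ 5 * y ^ 4 + ((-12) : ℝ) * s ^ 7 * y ^ 2 + (2 : ℝ) * s ^ 9) / (y ^ 4 + s ^ 4) ^ 3) := by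
    intro y
    have h0 : (0:ℝ) < y ^ 4 + s ^ 4 := by positivity
    rw [show deriv^[2] (fun y => doubleCauchy y s) y
        = deriv (deriv^[1] fun y => doubleCauchy y s) y from rfl,
      Filter.EventuallyEq.deriv_eq (Filter.Eventually.of_forall e1),
      ((xstep1 s y h0).const_mul ((π * Real.sqrt 2)⁻¹)).deriv]
  have e3 : ∀ y : ℝ, deriv^[3] (fun y => doubleCauchy y s) y = (π * Real.sqrt 2)⁻¹ * ((((-24) : ℝ) * s ^ 1 * y ^ 11 + ((-120) : ℝ) * s ^ 3 * y ^ 9 + (240 : ℝ) * s ^ 5 * y ^ 7 + (240 : ℝ) * s ^ 7 * y ^ 5 + ((-120) : ℝ) * s ^ 9 * y ^ 3 + ((-24) : ℝ) * s ^ 11 * y ^ 1) / (y ^ 4 + s ^ 4) ^ 4) := by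
    intro y
    have h0 : (0:ℝ) < y ^ 4 + s ^ 4 := by positivity
    rw [show deriv^[3] (fun y => doubleCauchy y s) y
        = deriv (deriv^[2] fun y => doubleCauchy y s) y from rfl,
      Filter.EventuallyEq.deriv_eq (Filter.Eventually.of_forall e2),
      ((xstep2 s y h0).const_mul ((π * Real.sqrt 2)⁻¹)).deriv]
  have e4 : ∀ y : ℝ, deriv^[4] (fun y => doubleCauchy y s) y = (π * Real.sqrt 2)⁻¹ * (((120 : ℝ) * s ^ 1 * y ^ 14 + (840 : ℝ) * s ^ 3 * y ^ 12 + ((-2424) : ℝ) * s ^ 5 * y ^ 10 + ((-3720) : ℝ) * s ^ 7 * y ^ 8 + (3240 : ℝ) * s ^ 9 * y ^ 6 + (1560 : ℝ) * s ^ 11 * y ^ 4 + ((-360) : ℝ) * s ^ 13 * y ^ 2 + ((-24) : ℝ) * s ^ 15) / (y ^ 4 + s ^ 4) ^ 5) := by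
    intro y
    have h0 : (0:ℝ) < y ^ 4 + s ^ 4 := by positivity
    rw [show deriv^[4] (fun y => doubleCauchy y s) y
        = deriv (deriv^[3] fun y => doubleCauchy y s) y from rfl,
      Filter.EventuallyEq.deriv_eq (Filter.Eventually.of_forall e3),
      ((xstep3 s y h0).const_mul ((π * Real.sqrt 2)⁻¹)).deriv]
  exact e4 x

lemma sum_zero_key (s x : ℝ) (hs : s ≠ 0) :
    ((24 : ℝ) * s ^ 15 + (360 : ℝ) * x ^ 2 * s ^ 13 + ((-1560) : ℝ) * x ^ 4 * s ^ 11 + ((-3240) : ℝ) * x ^ 6 * s ^ 9 + (3720 : ℝ) * x ^ 8 * s ^ 7 + (2424 : ℝ) * x ^ 10 * s ^ 5 + ((-840) : ℝ) * x ^ 12 * s ^ 3 + ((-120) : ℝ) * x ^ 14 * s ^ 1) / (s ^ 4 + x ^ 4) ^ 5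
      + ((120 : ℝ) * s ^ 1 * x ^ 14 + (840 : ℝ) * s ^ 3 * x ^ 12 + ((-2424) : ℝ) * s ^ 5 * x ^ 10 + ((-3720) : ℝ) * s ^ 7 * x ^ 8 + (3240 : ℝ) * s ^ 9 * x ^ 6 + (1560 : ℝ) * s ^ 11 * x ^ 4 + ((-360) : ℝ) * s ^ 13 * x ^ 2 + ((-24) : ℝ) * s ^ 15) / (x ^ 4 + s ^ 4) ^ 5 = 0 := by
  rw [show x ^ 4 + s ^ 4 = s ^ 4 + x ^ 4 by ring, ← add_div,
    show ((24 : ℝ) * s ^ 15 + (360 : ℝ) * x ^ 2 * s ^ 13 + ((-1560) : ℝ) * x ^ 4 * s ^ 11 + ((-3240) : ℝ) * x ^ 6 * s ^ 9 + (3720 : ℝ) * x ^ 8 * s ^ 7 + (2424 : ℝ) * x ^ 10 * s ^ 5 + ((-840) : ℝ) * x ^ 12 * s ^ 3 + ((-120) : ℝ) * x ^ 14 * s ^ 1) + ((120 : ℝ) * s ^ 1 * x ^ 14 + (840 : ℝ) * s ^ 3 * x ^ 12 + ((-2424) : ℝ) * s ^ 5 * x ^ 10 + ((-3720) : ℝ)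 * s ^ 7 * x ^ 8 + (3240 : ℝ) * s ^ 9 * x ^ 6 + (1560 : ℝ) * s ^ 11 * x ^ 4 + ((-360) : ℝ) * s ^ 13 * x ^ 2 + ((-24) : ℝ) * s ^ 15) = 0 by ring, zero_div]

lemma integral_doubleCauchy (t : ℝ) (ht : 0 < t) : (∫ x : ℝ, doubleCauchy x t) = 1 := by
  have hr : (0:ℝ) < Real.sqrt 2 := by positivity
  have hr2 : Real.sqrt 2 ^ 2 = 2 := Real.sq_sqrt (by norm_num)
  have hπ : (0:ℝ) < π := Real.pi_pos
  set u : ℝ := t / Real.sqrt 2 with hu_def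
  have hu : 0 < u := div_pos ht hr
  set F : ℝ → ℝ := fun x => u⁻¹ * (1 + (x / u) ^ 2)⁻¹ with hF_def
  have hFint : Integrable F := (integrable_inv_one_add_sq.comp_div hu.ne').const_mul u⁻¹
  have hFval : (∫ x : ℝ, F x) = π := by
    rw [hF_def]
    rw [MeasureTheory.integral_const_mul]
    rw [MeasureTheory.Measure.integral_comp_div (fun x => (1 + x ^ 2)⁻¹) u]
    rw [integral_univ_inv_one_add_sq, smul_eq_mul, abs_of_pos hu]
    field_simp
  have ht' : t = Real.sqrt 2 * u := by
    rw [hu_def, mul_div_cancel₀ _ hr.ne']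
  have key : ∀ x : ℝ, doubleCauchy x t = (2 * π)⁻¹ * (F (x - u) + F (x + u)) := by
    intro x
    have hd : (0:ℝ) < 4 * u ^ 4 + x ^ 4 := by positivity
    have h1 : (0:ℝ) < 1 + ((x - u) / u) ^ 2 := by positivity
    have h2 : (0:ℝ) < 1 + ((x + u) / u) ^ 2 := by positivity
    have e2 : (Real.sqrt 2 * u) ^ 2 = 2 * u ^ 2 := by rw [mul_pow, hr2]
    have e4 : (Real.sqrt 2 * u) ^ 4 = 4 * u ^ 4 := by
      rw [mul_pow, show (Real.sqrt 2) ^ 4 = ((Real.sqrt 2) ^ 2) ^ 2 by ring, hr2]; norm_num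
    have lhs : doubleCauchy x t = (u / π) * ((2 * u ^ 2 + x ^ 2) / (4 * u ^ 4 + x ^ 4)) := by
      simp only [doubleCauchy]
      rw [ht', e2, e4]
      field_simp
    rw [lhs, hF_def]
    field_simp
    ring
  calc (∫ x : ℝ, doubleCauchy x t)
      = ∫ x : ℝ, (2 * π)⁻¹ * (F (x - u) + F (x + u)) := by simp_rw [key]
    _ = (2 * π)⁻¹ * ∫ x : ℝ, (F (x - u) + F (x + u)) := MeasureTheory.integral_const_mul _ _
    _ = (2 * π)⁻¹ * ((∫ x : ℝ, F (x - u)) + ∫ x : ℝ, F (x + u)) := by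
        rw [integral_add (hFint.comp_sub_right u) (hFint.comp_add_right u)]
    _ = (2 * π)⁻¹ * (π + π) := by
        rw [integral_sub_right_eq_self F u, integral_add_right_eq_self F u, hFval]
    _ = 1 := by field_simp; ring

theorem double_cauchy_density (t : ℝ) (ht : 0 < t) :
    (∀ x : ℝ, 0 ≤ doubleCauchy x t) ∧
    (∫ x : ℝ, doubleCauchy x t) = 1 ∧
    (∀ x : ℝ, ∀ s : ℝ, 0 < s →
      (deriv^[4] fun τ => doubleCauchy x τ) s +
        (deriv^[4] fun y => doubleCauchy y s) x = 0) := by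
  refine ⟨fun x => ?_, ?_, fun x s hs => ?_⟩
  · unfold doubleCauchy
    positivity
  · exact integral_doubleCauchy t ht
  · rw [tchain x s hs, xchain s hs x, ← mul_add, sum_zero_key s x hs.ne', mul_zero]
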